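/- Let p ≥ 1, c₂ > 0 and let c₁ be a constant with c₁ · √c₂ ≥ 4p. Then for every n ≥ 1, P( | n^{−1} Σ_{i=1}^n Σ_{k∈ℤ} ( φ(X_i − k) − E[φ(X_i − k)] ) | > c₁ · √(V_{2,φ}(n)) ) ≤ 2 n^{−p}, where V_{2,φ}(n) = c₂ · log(n) · (2A + 1)² · Φ₀² / n. -/

import Mathlib

open MeasureTheory ProbabilityTheory Real
open scoped ENNReal NNReal

lemma aux_exp_quad {x : ℝ} (hx : |x| ≤ 1) : Real.exp x ≤ 1 + x + x ^ 2 := by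
  have h := Real.exp_bound hx (by norm_num : 0 < 2)
  have hs : ∑ i ∈ Finset.range 2, x ^ i / (Nat.factorial i : ℝ) = 1 + x := by
    simp [Finset.sum_range_succ, Nat.factorial]
  rw [hs] at h
  have h2 : |x| ^ 2 = x ^ 2 := sq_abs x
  have h3 : ((Nat.succ 2 : ℕ) : ℝ) / ((Nat.factorial 2 : ℕ) * (2:ℕ)) = 3 / 4 := by
    norm_num [Nat.factorial]
  rw [h3, h2] at h
  have := abs_le.mp h
  nlinarith [sq_nonneg x]

lemma aux_mgf_le {Ω : Type*} [MeasurableSpace Ω] (P : Measure Ω) [IsProbabilityMeasure P]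
    (Y : Ω → ℝ) (hY : Measurable Y) (c t : ℝ) (hc : 0 ≤ c) (hbd : ∀ ω, |Y ω| ≤ c)
    (hmean : ∫ ω, Y ω ∂P = 0) (ht : 0 ≤ t) (htc : t * c ≤ 1) :
    mgf Y P t ≤ Real.exp (t ^ 2 * c ^ 2) := by
  have habs : ∀ ω, |t * Y ω| ≤ 1 := fun ω => by
    rw [abs_mul, abs_of_nonneg ht]
    exact le_trans (mul_le_mul_of_nonneg_left (hbd ω) ht) htc
  have hYint : Integrable Y P :=
    (integrable_const c).mono' hY.aestronglyMeasurable
      (Filter.Eventually.of_forall fun ω => by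
        rw [Real.norm_eq_abs]; exact hbd ω)
  have hY2int : Integrable (fun ω => Y ω ^ 2) P :=
    (integrable_const (c ^ 2)).mono' (hY.pow_const 2).aestronglyMeasurable
      (Filter.Eventually.of_forall fun ω => by
        rw [Real.norm_eq_abs, abs_pow, ← sq_abs c, abs_of_nonneg hc]
        exact pow_le_pow_left₀ (abs_nonneg _) (hbd ω) 2)
  have hexpint : Integrable (fun ω => Real.exp (t * Y ω)) P :=
    (integrable_const (Real.exp 1)).mono'
      ((hY.const_mul t).exp).aestronglyMeasurable
      (Filter.Eventually.of_forall fun ω => by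
        rw [Real.norm_eq_abs, abs_of_pos (Real.exp_pos _)]
        exact Real.exp_le_exp.mpr (le_trans (le_abs_self _) (habs ω)))
  have hpt : ∀ ω, Real.exp (t * Y ω) ≤ 1 + t * Y ω + t ^ 2 * Y ω ^ 2 := fun ω => by
    have := aux_exp_quad (habs ω)
    nlinarith [sq_nonneg (t * Y ω)]
  have hrhsint : Integrable (fun ω => 1 + t * Y ω + t ^ 2 * Y ω ^ 2) P :=
    ((integrable_const 1).add (hYint.const_mul t)).add (hY2int.const_mul (t ^ 2))
  have hint_le : mgf Y P t ≤ ∫ ω, (1 + t * Y ω + t ^ 2 * Y ω ^ 2) ∂P :=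
    integral_mono hexpint hrhsint hpt
  have hval : ∫ ω, (1 + t * Y ω + t ^ 2 * Y ω ^ 2) ∂P = 1 + t ^ 2 * ∫ ω, Y ω ^ 2 ∂P := by
    have e1 : ∫ ω, (1 + t * Y ω + t ^ 2 * Y ω ^ 2) ∂P
        = (∫ ω, (1 + t * Y ω) ∂P) + ∫ ω, t ^ 2 * Y ω ^ 2 ∂P :=
      integral_add ((integrable_const 1).add (hYint.const_mul t)) (hY2int.const_mul (t ^ 2))
    have e2 : ∫ ω, (1 + t * Y ω) ∂P = (∫ _ω, (1:ℝ) ∂P) + ∫ ω, t * Y ω ∂P :=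
      integral_add (integrable_const 1) (hYint.const_mul t)
    rw [e1, e2, integral_const, integral_const_mul, integral_const_mul, hmean]
    simp
  have hY2le : ∫ ω, Y ω ^ 2 ∂P ≤ c ^ 2 := by
    calc ∫ ω, Y ω ^ 2 ∂P ≤ ∫ _ω, c ^ 2 ∂P := integral_mono hY2int (integrable_const _)
          (fun ω => by
            rw [← sq_abs (Y ω)]
            exact pow_le_pow_left₀ (abs_nonneg _) (hbd ω) 2)
      _ = c ^ 2 := by simp
  calc mgf Y P t ≤ 1 + t ^ 2 * ∫ ω, Y ω ^ 2 ∂P := hval ▸ hint_le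
    _ ≤ 1 + t ^ 2 * c ^ 2 := by nlinarith [sq_nonneg t]
    _ ≤ Real.exp (t ^ 2 * c ^ 2) := by
        have := Real.add_one_le_exp (t ^ 2 * c ^ 2); linarith

lemma aux_chernoff {Ω : Type*} [MeasurableSpace Ω] (P : Measure Ω) [IsProbabilityMeasure P]
    {n : ℕ} (Y : Fin n → Ω → ℝ) (hmeas : ∀ i, Measurable (Y i))
    (hindep : iIndepFun Y P)
    (c : ℝ) (hc : 0 < c) (hbd : ∀ i ω, |Y i ω| ≤ c) (hmean : ∀ i, ∫ ω, Y i ω ∂P = 0)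
    (ε : ℝ) (hε : 0 ≤ ε) (hεc : ε ≤ 2 * c) :
    (P {ω | (n : ℝ) * ε ≤ ∑ i, Y i ω}).toReal ≤
      Real.exp (-((n : ℝ) * ε ^ 2) / (4 * c ^ 2)) := by
  set t : ℝ := ε / (2 * c ^ 2) with ht_def
  have ht : 0 ≤ t := div_nonneg hε (by positivity)
  have htc : t * c ≤ 1 := by
    rw [ht_def]
    rw [div_mul_eq_mul_div, div_le_one (by positivity)]
    nlinarith
  have habs : ∀ i ω, |t * Y i ω| ≤ 1 := fun i ω => by
    rw [abs_mul, abs_of_nonneg ht]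
    exact le_trans (mul_le_mul_of_nonneg_left (hbd i ω) ht) htc
  have hint : ∀ i : Fin n, Integrable (fun ω => Real.exp (t * Y i ω)) P := fun i =>
    (integrable_const (Real.exp 1)).mono'
      (((hmeas i).const_mul t).exp).aestronglyMeasurable
      (Filter.Eventually.of_forall fun ω => by
        rw [Real.norm_eq_abs, abs_of_pos (Real.exp_pos _)]
        exact Real.exp_le_exp.mpr (le_trans (le_abs_self _) (habs i ω)))
  have hSint : Integrable (fun ω => Real.exp (t * (∑ i, Y i) ω)) P :=
    hindep.integrable_exp_mul_sum hmeas (fun i _ => hint i)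
  have hset : {ω | (n : ℝ) * ε ≤ ∑ i, Y i ω} = {ω | (n : ℝ) * ε ≤ (∑ i, Y i) ω} := by
    ext ω; simp
  have hmgf : mgf (∑ i, Y i) P t ≤ Real.exp ((n : ℝ) * (t ^ 2 * c ^ 2)) := by
    rw [hindep.mgf_sum hmeas]
    calc ∏ i, mgf (Y i) P t ≤ ∏ _i : Fin n, Real.exp (t ^ 2 * c ^ 2) :=
          Finset.prod_le_prod (fun i _ => mgf_nonneg)
            (fun i _ => aux_mgf_le P (Y i) (hmeas i) c t hc.le (hbd i) (hmean i) ht htc)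
      _ = Real.exp ((n : ℝ) * (t ^ 2 * c ^ 2)) := by
          rw [Finset.prod_const, ← Real.exp_nat_mul]
          simp
  calc (P {ω | (n : ℝ) * ε ≤ ∑ i, Y i ω}).toReal
      ≤ Real.exp (-t * ((n : ℝ) * ε)) * mgf (∑ i, Y i) P t := by
        rw [hset]; exact measure_ge_le_exp_mul_mgf ((n : ℝ) * ε) ht hSint
    _ ≤ Real.exp (-t * ((n : ℝ) * ε)) * Real.exp ((n : ℝ) * (t ^ 2 * c ^ 2)) := by
        exact mul_le_mul_of_nonneg_left hmgf (Real.exp_pos _).le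
    _ = Real.exp (-t * ((n : ℝ) * ε) + (n : ℝ) * (t ^ 2 * c ^ 2)) := (Real.exp_add _ _).symm
    _ = Real.exp (-((n : ℝ) * ε ^ 2) / (4 * c ^ 2)) := by
        congr 1
        rw [ht_def]
        field_simp
        ring

set_option maxHeartbeats 1000000 in
/-- Concentration of the empirical scaling-coefficient process.
`φ` is a measurable function vanishing outside `[-A, A]` with `‖φ‖_∞ ≤ Φ₀`, and
`X₁, …, X_n` are i.i.d. with common density `f ∈ L²(ℝ)`.  For `p ≥ 1`, `c₂ > 0` and
`c₁ √c₂ ≥ 4p`, the probability that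
`|n⁻¹ ∑_{i=1}^n ∑_{k∈ℤ} (φ(X_i − k) − E[φ(X_i − k)])| > c₁ √(V_{2,φ}(n))`
is at most `2 n^{-p}`, where `V_{2,φ}(n) = c₂ log(n) (2A+1)² Φ₀² / n`. -/
theorem stmt_5 {Ω : Type*} [MeasurableSpace Ω] (P : Measure Ω) [IsProbabilityMeasure P]
    (A : ℕ) (hA : 0 < A) (Φ₀ : ℝ) (hΦ₀ : 0 < Φ₀)
    (φ : ℝ → ℝ) (hφ_meas : Measurable φ)
    (hφ_supp : ∀ y : ℝ, y ∉ Set.Icc (-(A : ℝ)) (A : ℝ) → φ y = 0)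
    (hφ_bdd : ∀ y : ℝ, |φ y| ≤ Φ₀)
    (n : ℕ) (hn : 1 ≤ n)
    (X : Fin n → Ω → ℝ) (hX_meas : ∀ i, Measurable (X i))
    (hX_indep : iIndepFun X P)
    (f : ℝ → ℝ) (hf_meas : Measurable f) (hf_L2 : MemLp f 2 volume)
    (hX_law : ∀ i, P.map (X i) = volume.withDensity fun x => ENNReal.ofReal (f x))
    (p c₁ c₂ : ℝ) (hp : 1 ≤ p) (hc₂ : 0 < c₂) (hc₁ : 4 * p ≤ c₁ * Real.sqrt c₂) :
    (P {ω | c₁ * Real.sqrt (c₂ * Real.log n * (2 * (A : ℝ) + 1) ^ 2 * Φ₀ ^ 2 / n) <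
        |(n : ℝ)⁻¹ * ∑ i : Fin n,
          ∑' k : ℤ, (φ (X i ω - (k : ℝ)) - ∫ ω', φ (X i ω' - (k : ℝ)) ∂P)|}).toReal ≤
      2 * (n : ℝ) ^ (-p) := by
  classical
  -- basic positivity facts
  have hnR : (1 : ℝ) ≤ (n : ℝ) := by exact_mod_cast hn
  have hnpos : (0 : ℝ) < n := by linarith
  have hsqc₂ : 0 < Real.sqrt c₂ := Real.sqrt_pos.mpr hc₂
  have hc₁pos : 0 < c₁ := by nlinarith
  have hlogn : 0 ≤ Real.log n := Real.log_nonneg hnR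
  -- the function g
  set g : ℝ → ℝ := fun x => ∑' k : ℤ, φ (x - k) with hg_def
  have hsupp : ∀ (x : ℝ) (k : ℤ), k ∉ Finset.Icc (⌊x⌋ - A) (⌊x⌋ + A) → φ (x - k) = 0 := by
    intro x k hk
    by_contra hne
    apply hk
    have hmem : x - k ∈ Set.Icc (-(A : ℝ)) (A : ℝ) := by
      by_contra hmem; exact hne (hφ_supp _ hmem)
    obtain ⟨h1, h2⟩ := hmem
    rw [Finset.mem_Icc]
    constructor
    · have : ((⌊x⌋ - A : ℤ) : ℝ) ≤ k := by
        push_cast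
        have := Int.floor_le x
        linarith
      exact_mod_cast this
    · have hlt : (k : ℝ) < ((⌊x⌋ + A + 1 : ℤ) : ℝ) := by
        push_cast
        have := Int.lt_floor_add_one x
        linarith
      have : (k : ℤ) < ⌊x⌋ + A + 1 := by exact_mod_cast hlt
      omega
  have hgsum : ∀ x : ℝ, g x = ∑ k ∈ Finset.Icc (⌊x⌋ - A) (⌊x⌋ + A), φ (x - k) :=
    fun x => tsum_eq_sum (hsupp x)
  have hcard : ∀ x : ℝ, (Finset.Icc (⌊x⌋ - A) (⌊x⌋ + A)).card = 2 * A + 1 := by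
    intro x
    rw [Int.card_Icc]
    omega
  set B : ℝ := (2 * (A : ℝ) + 1) * Φ₀ with hB_def
  have hBpos : 0 < B := by positivity
  have hgbd : ∀ x : ℝ, |g x| ≤ B := by
    intro x
    rw [hgsum x]
    calc |∑ k ∈ Finset.Icc (⌊x⌋ - A) (⌊x⌋ + A), φ (x - k)|
        ≤ ∑ k ∈ Finset.Icc (⌊x⌋ - A) (⌊x⌋ + A), |φ (x - k)| := Finset.abs_sum_le_sum_abs _ _
      _ ≤ (Finset.Icc (⌊x⌋ - A) (⌊x⌋ + A)).card • Φ₀ :=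
          Finset.sum_le_card_nsmul _ _ _ (fun k _ => hφ_bdd _)
      _ = B := by
          rw [hcard x, nsmul_eq_mul, hB_def]
          push_cast
          ring
  have hgmeas : Measurable g := by
    have hrepr : g = fun x => ∑ j ∈ Finset.Icc (-(A : ℤ)) A, φ (x - ((⌊x⌋ + j : ℤ) : ℝ)) := by
      funext x
      rw [hgsum x]
      have : Finset.Icc (⌊x⌋ - A) (⌊x⌋ + A)
          = Finset.map (addLeftEmbedding ⌊x⌋) (Finset.Icc (-(A : ℤ)) A) := by
        rw [Finset.map_add_left_Icc]
        congr 1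
      rw [this, Finset.sum_map]
      rfl
    rw [hrepr]
    apply Finset.measurable_sum
    intro j _
    apply hφ_meas.comp
    apply measurable_id.sub
    have h1 : Measurable fun x : ℝ => (⌊x⌋ + j : ℤ) := Int.measurable_floor.add_const j
    exact (measurable_from_top (f := (Int.cast : ℤ → ℝ))).comp h1
  -- the law ν
  set ν : Measure ℝ := volume.withDensity fun x => ENNReal.ofReal (f x) with hν_def
  have i₀ : Fin n := ⟨0, hn⟩
  have hνprob : IsProbabilityMeasure ν := by
    rw [← hX_law i₀]
    exact Measure.isProbabilityMeasure_map (hX_meas i₀).aemeasurable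
  have hφk_meas : ∀ k : ℤ, Measurable fun x : ℝ => φ (x - (k : ℝ)) :=
    fun k => hφ_meas.comp (measurable_id.sub_const _)
  have hlint : ∑' k : ℤ, ∫⁻ x, ‖φ (x - (k : ℝ))‖₊ ∂ν ≠ ⊤ := by
    rw [← lintegral_tsum (fun k => (hφk_meas k).nnnorm.coe_nnreal_ennreal.aemeasurable)]
    have hpt : ∀ x : ℝ, (∑' k : ℤ, (‖φ (x - (k : ℝ))‖₊ : ℝ≥0∞)) ≤ ENNReal.ofReal B := by
      intro x
      have h1 : ∑' k : ℤ, (‖φ (x - (k : ℝ))‖₊ : ℝ≥0∞)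
          = ∑ k ∈ Finset.Icc (⌊x⌋ - A) (⌊x⌋ + A), (‖φ (x - (k : ℝ))‖₊ : ℝ≥0∞) :=
        tsum_eq_sum (fun k hk => by rw [hsupp x k hk]; simp)
      rw [h1]
      calc ∑ k ∈ Finset.Icc (⌊x⌋ - A) (⌊x⌋ + A), (‖φ (x - (k : ℝ))‖₊ : ℝ≥0∞)
          ≤ ∑ _k ∈ Finset.Icc (⌊x⌋ - A) (⌊x⌋ + A), ENNReal.ofReal Φ₀ := by
            apply Finset.sum_le_sum
            intro k _
            rw [← enorm_eq_nnnorm, Real.enorm_eq_ofReal_abs]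
            exact ENNReal.ofReal_le_ofReal (hφ_bdd _)
        _ = ENNReal.ofReal B := by
            rw [Finset.sum_const, hcard x, nsmul_eq_mul, hB_def,
              ENNReal.ofReal_mul (by positivity), ← ENNReal.ofReal_natCast]
            congr 1
            push_cast
            ring
    have hfin : ∫⁻ x, ∑' k : ℤ, (‖φ (x - (k : ℝ))‖₊ : ℝ≥0∞) ∂ν < ⊤ := calc
      ∫⁻ x, ∑' k : ℤ, (‖φ (x - (k : ℝ))‖₊ : ℝ≥0∞) ∂ν
        ≤ ∫⁻ _x, ENNReal.ofReal B ∂ν := lintegral_mono (fun x => hpt x)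
      _ = ENNReal.ofReal B := by simp
      _ < ⊤ := ENNReal.ofReal_lt_top
    exact hfin.ne
  have hsum2 : Summable fun k : ℤ => ∫ x, φ (x - (k : ℝ)) ∂ν := by
    apply Summable.of_norm_bounded (g := fun k : ℤ => (∫⁻ x, ‖φ (x - (k : ℝ))‖₊ ∂ν).toReal)
      (ENNReal.summable_toReal hlint)
    intro k
    calc ‖∫ x, φ (x - (k : ℝ)) ∂ν‖ ≤ (∫⁻ x, ENNReal.ofReal ‖φ (x - (k : ℝ))‖ ∂ν).toReal :=
          norm_integral_le_lintegral_norm _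
      _ = (∫⁻ x, ‖φ (x - (k : ℝ))‖₊ ∂ν).toReal := by
          congr 1
          apply lintegral_congr
          intro x
          exact (ofReal_norm _).trans (enorm_eq_nnnorm _)
  have hinter : ∫ x, g x ∂ν = ∑' k : ℤ, ∫ x, φ (x - (k : ℝ)) ∂ν := by
    rw [hg_def]
    exact integral_tsum (fun k => (hφk_meas k).aestronglyMeasurable) hlint
  have hlaw : ∀ (i : Fin n) (k : ℤ), ∫ ω', φ (X i ω' - (k : ℝ)) ∂P = ∫ x, φ (x - (k : ℝ)) ∂ν := by
    intro i k
    rw [← hX_law i, integral_map (hX_meas i).aemeasurable (hφk_meas k).aestronglyMeasurable]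
  have hglaw : ∀ i : Fin n, ∫ ω', g (X i ω') ∂P = ∫ x, g x ∂ν := by
    intro i
    rw [← hX_law i, integral_map (hX_meas i).aemeasurable hgmeas.aestronglyMeasurable]
  set μ₀ : ℝ := ∫ x, g x ∂ν with hμ₀_def
  have hkey : ∀ (i : Fin n) (ω : Ω),
      ∑' k : ℤ, (φ (X i ω - (k : ℝ)) - ∫ ω', φ (X i ω' - (k : ℝ)) ∂P) = g (X i ω) - μ₀ := by
    intro i ω
    have h1 : Summable fun k : ℤ => φ (X i ω - (k : ℝ)) :=
      summable_of_ne_finset_zero (hsupp (X i ω))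
    have heq : (fun k : ℤ => φ (X i ω - (k : ℝ)) - ∫ ω', φ (X i ω' - (k : ℝ)) ∂P)
        = fun k : ℤ => φ (X i ω - (k : ℝ)) - ∫ x, φ (x - (k : ℝ)) ∂ν := by
      funext k; rw [hlaw i k]
    rw [heq, Summable.tsum_sub h1 hsum2, ← hinter]
  have hμ₀bd : |μ₀| ≤ B := by
    rw [hμ₀_def]
    have := norm_integral_le_of_norm_le_const (μ := ν) (C := B)
      (Filter.Eventually.of_forall fun x => by rw [Real.norm_eq_abs]; exact hgbd x)
    simpa using this
  -- the centered variables
  set Y : Fin n → Ω → ℝ := fun i ω => g (X i ω) - μ₀ with hY_def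
  have hYmeas : ∀ i, Measurable (Y i) := fun i => (hgmeas.comp (hX_meas i)).sub_const _
  have hYindep : iIndepFun Y P := by
    have := hX_indep.comp (fun _ : Fin n => fun x : ℝ => g x - μ₀)
      (fun _ => hgmeas.sub_const _)
    exact this
  have hYbd : ∀ i ω, |Y i ω| ≤ 2 * B := fun i ω => by
    rw [hY_def]
    calc |g (X i ω) - μ₀| ≤ |g (X i ω)| + |μ₀| := abs_sub _ _
      _ ≤ B + B := add_le_add (hgbd _) hμ₀bd
      _ = 2 * B := by ring
  have hYmean : ∀ i, ∫ ω, Y i ω ∂P = 0 := by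
    intro i
    have hgXint : Integrable (fun ω => g (X i ω)) P :=
      (integrable_const B).mono' (hgmeas.comp (hX_meas i)).aestronglyMeasurable
        (Filter.Eventually.of_forall fun ω => by rw [Real.norm_eq_abs]; exact hgbd _)
    rw [hY_def]
    simp only
    rw [integral_sub hgXint (integrable_const μ₀), integral_const, hglaw i]
    simp [hμ₀_def]
  -- the threshold
  set ε₀ : ℝ := c₁ * Real.sqrt (c₂ * Real.log n * (2 * (A : ℝ) + 1) ^ 2 * Φ₀ ^ 2 / n)
    with hε₀_def
  have hε₀ : 0 ≤ ε₀ := mul_nonneg hc₁pos.le (Real.sqrt_nonneg _)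
  have hinner : c₂ * Real.log n * (2 * (A : ℝ) + 1) ^ 2 * Φ₀ ^ 2 / n
      = c₂ * Real.log n * B ^ 2 / n := by rw [hB_def]; ring
  have hinner_nonneg : 0 ≤ c₂ * Real.log n * B ^ 2 / n := by positivity
  have hε₀sq : ε₀ ^ 2 = c₁ ^ 2 * (c₂ * Real.log n * B ^ 2 / n) := by
    rw [hε₀_def, mul_pow, hinner, Real.sq_sqrt hinner_nonneg]
  -- rewrite the event
  have hEvent : {ω | c₁ * Real.sqrt (c₂ * Real.log n * (2 * (A : ℝ) + 1) ^ 2 * Φ₀ ^ 2 / n) <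
        |(n : ℝ)⁻¹ * ∑ i : Fin n,
          ∑' k : ℤ, (φ (X i ω - (k : ℝ)) - ∫ ω', φ (X i ω' - (k : ℝ)) ∂P)|}
      = {ω | ε₀ < |(n : ℝ)⁻¹ * ∑ i : Fin n, Y i ω|} := by
    apply Set.eq_of_subset_of_subset <;>
      · intro ω hω
        simp only [Set.mem_setOf_eq] at hω ⊢
        convert hω using 3
        all_goals
          apply Finset.sum_congr rfl
          intro i _
          rw [hkey i ω]
  rw [hEvent]
  -- RHS nonneg
  have hrpow_pos : (0 : ℝ) < (n : ℝ) ^ (-p) := Real.rpow_pos_of_pos hnpos _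
  by_cases hbig : 2 * B ≤ ε₀
  · -- the event is empty
    have : {ω | ε₀ < |(n : ℝ)⁻¹ * ∑ i : Fin n, Y i ω|} = ∅ := by
      apply Set.eq_empty_iff_forall_notMem.mpr
      intro ω hω
      simp only [Set.mem_setOf_eq] at hω
      have hle : |(n : ℝ)⁻¹ * ∑ i : Fin n, Y i ω| ≤ 2 * B := by
        rw [abs_mul, abs_of_nonneg (inv_nonneg.mpr hnpos.le)]
        calc (n : ℝ)⁻¹ * |∑ i : Fin n, Y i ω| ≤ (n : ℝ)⁻¹ * ((n : ℝ) * (2 * B)) := by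
              apply mul_le_mul_of_nonneg_left _ (inv_nonneg.mpr hnpos.le)
              calc |∑ i : Fin n, Y i ω| ≤ ∑ i : Fin n, |Y i ω| := Finset.abs_sum_le_sum_abs _ _
                _ ≤ ∑ _i : Fin n, 2 * B := Finset.sum_le_sum (fun i _ => hYbd i ω)
                _ = (n : ℝ) * (2 * B) := by simp [Finset.sum_const, mul_comm]
          _ = 2 * B := by field_simp
      linarith
    rw [this]
    simp only [measure_empty, ENNReal.toReal_zero]
    positivity
  · push_neg at hbig
    -- split into two tails
    have hsub : {ω | ε₀ < |(n : ℝ)⁻¹ * ∑ i : Fin n, Y i ω|}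
        ⊆ {ω | (n : ℝ) * ε₀ ≤ ∑ i, Y i ω} ∪ {ω | (n : ℝ) * ε₀ ≤ ∑ i, (fun i ω => -(Y i ω)) i ω} := by
      intro ω hω
      simp only [Set.mem_setOf_eq, Set.mem_union] at hω ⊢
      rw [abs_mul, abs_of_nonneg (inv_nonneg.mpr hnpos.le)] at hω
      have h2 : (n : ℝ) * ε₀ < |∑ i : Fin n, Y i ω| := by
        have h3 := mul_lt_mul_of_pos_left hω hnpos
        have h4 : (n : ℝ) * ((n : ℝ)⁻¹ * |∑ i : Fin n, Y i ω|) = |∑ i : Fin n, Y i ω| := by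
          field_simp
        rw [h4] at h3
        exact h3
      rcases le_or_gt 0 (∑ i : Fin n, Y i ω) with hpos' | hneg'
      · left
        rw [abs_of_nonneg hpos'] at h2
        exact h2.le
      · right
        rw [abs_of_neg hneg'] at h2
        have hns : ∑ i : Fin n, (fun i ω => -(Y i ω)) i ω = -(∑ i : Fin n, Y i ω) := by
          simp
        rw [hns]
        exact h2.le
    have hεc : ε₀ ≤ 2 * (2 * B) := by linarith
    have htail1 : (P {ω | (n : ℝ) * ε₀ ≤ ∑ i, Y i ω}).toReal ≤
        Real.exp (-((n : ℝ) * ε₀ ^ 2) / (4 * (2 * B) ^ 2)) :=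
      aux_chernoff P Y hYmeas hYindep (2 * B) (by linarith) hYbd hYmean ε₀ hε₀ hεc
    have hYneg_meas : ∀ i, Measurable fun ω => -(Y i ω) := fun i => (hYmeas i).neg
    have hYneg_indep : iIndepFun (fun i ω => -(Y i ω)) P := by
      have := hYindep.comp (fun _ : Fin n => fun x : ℝ => -x) (fun _ => measurable_neg)
      exact this
    have htail2 : (P {ω | (n : ℝ) * ε₀ ≤ ∑ i, (fun i ω => -(Y i ω)) i ω}).toReal ≤
        Real.exp (-((n : ℝ) * ε₀ ^ 2) / (4 * (2 * B) ^ 2)) :=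
      aux_chernoff P (fun i ω => -(Y i ω)) hYneg_meas hYneg_indep (2 * B) (by linarith)
        (fun i ω => by rw [abs_neg]; exact hYbd i ω)
        (fun i => by rw [integral_neg, hYmean i, neg_zero]) ε₀ hε₀ hεc
    have hexp_le : Real.exp (-((n : ℝ) * ε₀ ^ 2) / (4 * (2 * B) ^ 2)) ≤ (n : ℝ) ^ (-p) := by
      rw [Real.rpow_def_of_pos hnpos]
      apply Real.exp_le_exp.mpr
      have harg : -((n : ℝ) * ε₀ ^ 2) / (4 * (2 * B) ^ 2)
          = -(c₁ ^ 2 * c₂ * Real.log n / 16) := by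
        rw [hε₀sq]
        field_simp
        ring
      rw [harg]
      have hc₁c₂ : 16 * p ≤ c₁ ^ 2 * c₂ := by
        have h1 : (4 * p) ^ 2 ≤ (c₁ * Real.sqrt c₂) ^ 2 :=
          pow_le_pow_left₀ (by linarith) hc₁ 2
        have h2 : (c₁ * Real.sqrt c₂) ^ 2 = c₁ ^ 2 * c₂ := by
          rw [mul_pow, Real.sq_sqrt hc₂.le]
        nlinarith
      have hmul : 16 * p * Real.log n ≤ c₁ ^ 2 * c₂ * Real.log n :=
        mul_le_mul_of_nonneg_right hc₁c₂ hlogn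
      linarith
    calc (P {ω | ε₀ < |(n : ℝ)⁻¹ * ∑ i : Fin n, Y i ω|}).toReal
        ≤ (P ({ω | (n : ℝ) * ε₀ ≤ ∑ i, Y i ω}
            ∪ {ω | (n : ℝ) * ε₀ ≤ ∑ i, (fun i ω => -(Y i ω)) i ω})).toReal :=
          ENNReal.toReal_mono (measure_ne_top P _) (measure_mono hsub)
      _ ≤ (P {ω | (n : ℝ) * ε₀ ≤ ∑ i, Y i ω}).toReal
            + (P {ω | (n : ℝ) * ε₀ ≤ ∑ i, (fun i ω => -(Y i ω)) i ω}).toReal := by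
          rw [← ENNReal.toReal_add (measure_ne_top P _) (measure_ne_top P _)]
          exact ENNReal.toReal_mono (by finiteness) (measure_union_le _ _)
      _ ≤ Real.exp (-((n : ℝ) * ε₀ ^ 2) / (4 * (2 * B) ^ 2))
            + Real.exp (-((n : ℝ) * ε₀ ^ 2) / (4 * (2 * B) ^ 2)) := add_le_add htail1 htail2
      _ ≤ 2 * (n : ℝ) ^ (-p) := by linarith
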